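/- The function 𝔉(x) = (φ/√5)·(φ^x + φ^{-x}·cos(πx)·φ^{-2}) is strictly increasing on [1, ∞). -/

import Mathlib

open Real
set_option maxHeartbeats 1000000

theorem benford_continuation_strictMonoOn
    (φ : ℝ) (hφ : φ = (1 + Real.sqrt 5) / 2)
    (𝔉 : ℝ → ℝ)
    (h𝔉 : ∀ x : ℝ, 𝔉 x = (φ / Real.sqrt 5) *
      (φ ^ x + φ ^ (-x) * Real.cos (Real.pi * x) * φ ^ (-2 : ℝ))) :
    StrictMonoOn 𝔉 (Set.Ici (1 : ℝ)) := by
  have hs5 : (2.2 : ℝ) < Real.sqrt 5 := by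
    rw [show (2.2:ℝ) < Real.sqrt 5 ↔ (2.2:ℝ)^2 < 5 from Real.lt_sqrt (by norm_num)]
    norm_num
  have h16 : (1.6 : ℝ) < φ := by rw [hφ]; linarith
  have hφ0 : (0:ℝ) < φ := by linarith
  set L := Real.log φ with hLdef
  have hL : (0.2 : ℝ) < L := by
    rw [hLdef, Real.lt_log_iff_exp_lt hφ0]
    have h5 : Real.exp 0.2 ^ 5 < (1.6:ℝ)^5 := by
      have : ((5:ℕ):ℝ) * 0.2 = 1 := by norm_num
      rw [← Real.exp_nat_mul, this]
      calc Real.exp 1 < 2.7182818286 := Real.exp_one_lt_d9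
        _ < 1.6^5 := by norm_num
    calc Real.exp 0.2 < 1.6 := lt_of_pow_lt_pow_left₀ 5 (by norm_num) h5
      _ < φ := h16
  have hL0 : (0:ℝ) < L := by linarith
  have hexpL : Real.exp L = φ := Real.exp_log hφ0
  set c : ℝ := φ / Real.sqrt 5 with hc
  have hc0 : 0 < c := div_pos hφ0 (by linarith)
  set f : ℝ → ℝ := fun x => c * (Real.exp (L*x) + Real.exp (-(L*x)) * Real.cos (π*x) * Real.exp (-(2*L))) with hf
  have hfun : 𝔉 = f := by
    funext x
    rw [h𝔉 x, hf]
    rw [Real.rpow_def_of_pos hφ0 x, Real.rpow_def_of_pos hφ0 (-x),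
        Real.rpow_def_of_pos hφ0 (-2 : ℝ)]
    rw [← hLdef]
    ring_nf
  rw [hfun]
  have hderiv : ∀ x : ℝ, HasDerivAt f
      (c * (Real.exp (L*x) * L +
        ((Real.exp (-(L*x)) * (-L)) * Real.cos (π*x) + Real.exp (-(L*x)) * (-Real.sin (π*x) * π)) * Real.exp (-(2*L)))) x := by
    intro x
    have h1 : HasDerivAt (fun x : ℝ => L * x) L x := by
      simpa using (hasDerivAt_id x).const_mul L
    have hexp1 : HasDerivAt (fun x : ℝ => Real.exp (L*x)) (Real.exp (L*x) * L) x := h1.exp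
    have h2 : HasDerivAt (fun x : ℝ => -(L * x)) (-L) x := h1.neg
    have hexp2 : HasDerivAt (fun x : ℝ => Real.exp (-(L*x))) (Real.exp (-(L*x)) * (-L)) x := h2.exp
    have h3 : HasDerivAt (fun x : ℝ => π * x) π x := by
      simpa using (hasDerivAt_id x).const_mul π
    have hcos : HasDerivAt (fun x : ℝ => Real.cos (π*x)) (-Real.sin (π*x) * π) x := h3.cos
    exact ((hexp1.add ((hexp2.mul hcos).mul_const _))).const_mul c
  apply strictMonoOn_of_deriv_pos (convex_Ici 1)
  · exact Continuous.continuousOn (by fun_prop)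
  · intro x hx
    rw [interior_Ici] at hx
    have hx1 : (1:ℝ) < x := hx
    rw [(hderiv x).deriv]
    apply mul_pos hc0
    set S := Real.sin (π*x) with hS
    set C := Real.cos (π*x) with hC
    set E := Real.exp (-(L*x)) with hEdef
    set K := Real.exp (-(2*L)) with hKdef
    set A := Real.exp (L*x) with hAdef
    have hE : (0:ℝ) < E := hEdef ▸ Real.exp_pos _
    have hK : (0:ℝ) < K := hKdef ▸ Real.exp_pos _
    have hA0 : (0:ℝ) < A := hAdef ▸ Real.exp_pos _
    have hC1 : C ≤ 1 := hC ▸ Real.cos_le_one _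
    have hS1' : S ≤ 1 := hS ▸ Real.sin_le_one _
    clear_value S C E K A
    have hB : (0:ℝ) < E * K := mul_pos hE hK
    rcases le_or_gt x 2 with h2 | h2
    · -- 1 < x ≤ 2 : sin(πx) ≤ 0
      have hsin : S ≤ 0 := by
        rw [hS, ← Real.sin_sub_two_pi]
        apply Real.sin_nonpos_of_nonpos_of_neg_pi_le
        · nlinarith [Real.pi_pos, mul_nonneg Real.pi_pos.le (by linarith : (0:ℝ) ≤ 2 - x)]
        · nlinarith [Real.pi_pos, mul_nonneg Real.pi_pos.le (by linarith : (0:ℝ) ≤ x - 1)]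
      have hAB : E * K < A := by
        rw [hEdef, hKdef, hAdef, ← Real.exp_add]
        apply Real.exp_lt_exp.mpr
        nlinarith [mul_pos hL0 (by linarith : (0:ℝ) < x + 1)]
      have hfac : -L ≤ -(L*C) - π*S := by
        nlinarith [mul_le_mul_of_nonneg_left hC1 hL0.le,
          mul_nonpos_of_nonneg_of_nonpos Real.pi_pos.le hsin]
      have hb1 : (E*K)*(-L) ≤ (E*K)*(-(L*C) - π*S) :=
        mul_le_mul_of_nonneg_left hfac hB.le
      have hb2 : L*(E*K) < L*A := mul_lt_mul_of_pos_left hAB hL0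
      have h1 : 0 < A*L + (E*K)*(-(L*C) - π*S) := by nlinarith [hb1, hb2]
      nlinarith [h1]
    · -- x ≥ 2
      have hkey : (L + π) * Real.exp (-(4*L)) < L * Real.exp (2*L) := by
        have h6 : Real.exp (6*L) = φ^6 := by
          have h66 : ((6:ℕ):ℝ) * L = 6 * L := by norm_num
          rw [← h66, Real.exp_nat_mul, hexpL]
        have hp6 : (1.6:ℝ)^6 < φ^6 := pow_lt_pow_left₀ h16 (by norm_num) (by norm_num)
        have hmain : L + π < L * Real.exp (6*L) := by
          rw [h6]
          nlinarith [Real.pi_lt_d2, mul_nonneg (by linarith : (0:ℝ) ≤ L - 0.2)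
            (by nlinarith : (0:ℝ) ≤ φ^6 - 16.777216)]
        have hE4 : (0:ℝ) < Real.exp (-(4*L)) := Real.exp_pos _
        calc (L + π) * Real.exp (-(4*L)) < L * Real.exp (6*L) * Real.exp (-(4*L)) :=
              mul_lt_mul_of_pos_right hmain hE4
          _ = L * Real.exp (2*L) := by rw [mul_assoc, ← Real.exp_add]; ring_nf
      have hAlow : Real.exp (2*L) ≤ A := by
        rw [hAdef]
        exact Real.exp_le_exp.mpr (by nlinarith [mul_nonneg hL0.le (by linarith : (0:ℝ) ≤ x - 2)])
      have hBle : E * K ≤ Real.exp (-(4*L)) := by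
        rw [hEdef, hKdef, ← Real.exp_add]
        exact Real.exp_le_exp.mpr (by nlinarith [mul_nonneg hL0.le (by linarith : (0:ℝ) ≤ x - 2)])
      have hLπ : (0:ℝ) < L + π := by positivity
      have hfac : -(L+π) ≤ -(L*C) - π*S := by
        nlinarith [mul_le_mul_of_nonneg_left hC1 hL0.le,
          mul_le_mul_of_nonneg_left hS1' Real.pi_pos.le]
      have hb1 : (E*K)*(-(L+π)) ≤ (E*K)*(-(L*C) - π*S) :=
        mul_le_mul_of_nonneg_left hfac hB.le
      have hchain1 : (L+π)*(E*K) ≤ (L+π)*Real.exp (-(4*L)) :=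
        mul_le_mul_of_nonneg_left hBle hLπ.le
      have hchain2 : L * Real.exp (2*L) ≤ L * A := mul_le_mul_of_nonneg_left hAlow hL0.le
      have h1 : 0 < A*L + (E*K)*(-(L*C) - π*S) := by nlinarith [hb1, hchain1, hchain2, hkey]
      nlinarith [h1]
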